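/- arXiv:2107.05610 — 4 statements merged into one kernel-verified Lean document; each statement's English description precedes it below -/
import Mathlib

section
/- Suppose positive real-valued differentiable functions P_1, ..., P_n : ℝ → ℝ satisfy the Lotka–Volterra equations dP_i/dt = f_i(P_1(t), ..., P_n(t)) · P_i(t) for continuous functions f_i : [0,∞)^n → ℝ. Let p_i(t) = P_i(t) / Σ_j P_j(t) and let f̄(t) = Σ_j p_j(t) f_j(P_1(t), ..., P_n(t)) be the mean fitness. Then for every time t, Σ_{i=1}^n ṗ_i(t) f_i(P_1(t), ..., P_n(t)) = Σ_{j=1}^n p_j(t) (f_j(P_1(t), ..., P_n(t)) − f̄(t))², i.e. the sum Σ_i ṗ_i f_i equals the variance in fitness. -/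
open scoped BigOperators

lemma algebra_key (n : ℕ) (x F : Fin n → ℝ) (hx : ∀ i, 0 < x i) (hS : 0 < ∑ j, x j) :
    ∑ i, ((F i * x i * (∑ j, x j) - x i * ∑ j, F j * x j) / (∑ j, x j)^2) * F i
      = ∑ j, (x j / ∑ k, x k) * (F j - ∑ k, (x k / ∑ j, x j) * F k)^2 := by
  set S : ℝ := ∑ j, x j with hSdef
  have hS0 : S ≠ 0 := ne_of_gt hS
  set b : ℝ := ∑ k, (x k / S) * F k with hb
  have hsum1 : ∑ i, x i / S = 1 := by
    rw [← Finset.sum_div]; field_simp; exact hSdef.symm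
  have h1 : ∀ i, ((F i * x i * S - x i * ∑ j, F j * x j) / S^2) * F i
      = (x i / S) * F i ^ 2 - ((x i / S) * F i) * b := by
    intro i
    have : ∑ j, F j * x j = b * S := by
      rw [hb, Finset.sum_mul]
      congr 1; ext j; field_simp
    rw [this]; field_simp
  have h2 : ∀ j, (x j / S) * (F j - b)^2
      = (x j / S) * F j ^ 2 - 2 * ((x j / S) * F j) * b + (x j / S) * b^2 := by
    intro j; ring
  simp only [h1, h2, Finset.sum_sub_distrib, Finset.sum_add_distrib,
    ← Finset.sum_mul, ← Finset.mul_sum]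
  rw [← hb]
  have : (∑ i, x i / S) * b ^ 2 = b ^ 2 := by rw [hsum1]; ring
  rw [hsum1]; ring

/-- **Theorem 1 (Price/Ewens part of Fisher's fundamental theorem).**
If positive differentiable populations `P i` obey the Lotka–Volterra equations
`(P i)' = f i (P t) * P i t` with each fitness `f i` continuous on `[0,∞)^n`,
and `p i = P i / ∑ j, P j`, then `∑ i, ṗ i * f i (P t)` equals the variance in
fitness `∑ j, p j * (f j (P t) - f̄)^2`, where `f̄ = ∑ j, p j * f j (P t)`. -/
theorem sum_deriv_mul_fitness_eq_variance
    (n : ℕ) (P : Fin n → ℝ → ℝ) (f : Fin n → (Fin n → ℝ) → ℝ)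
    (hpos : ∀ i t, 0 < P i t)
    (hPdiff : ∀ i, Differentiable ℝ (P i))
    (hcont : ∀ i, ContinuousOn (f i) {x : Fin n → ℝ | ∀ j, 0 ≤ x j})
    (hLV : ∀ i t, HasDerivAt (P i) (f i (fun j => P j t) * P i t) t)
    (p : Fin n → ℝ → ℝ)
    (hp : ∀ i t, p i t = P i t / ∑ j, P j t)
    (fbar : ℝ → ℝ)
    (hfbar : ∀ t, fbar t = ∑ j, p j t * f j (fun k => P k t))
    (t : ℝ) :
    ∑ i, deriv (p i) t * f i (fun k => P k t)
      = ∑ j, p j t * (f j (fun k => P k t) - fbar t) ^ 2 := by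
  rcases Nat.eq_zero_or_pos n with hn | hn
  · subst hn; simp
  have : NeZero n := ⟨hn.ne'⟩
  have hSpos : ∀ s, 0 < ∑ j, P j s := fun s =>
    Finset.sum_pos (fun j _ => hpos j s) Finset.univ_nonempty
  have hS : HasDerivAt (fun s => ∑ j, P j s) (∑ j, f j (fun k => P k t) * P j t) t :=
    HasDerivAt.fun_sum (fun j _ => hLV j t)
  have hderiv : ∀ i, deriv (p i) t
      = (f i (fun k => P k t) * P i t * (∑ j, P j t)
          - P i t * ∑ j, f j (fun k => P k t) * P j t) / (∑ j, P j t)^2 := by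
    intro i
    have hpi : p i = fun s => P i s / ∑ j, P j s := funext fun s => hp i s
    rw [hpi]
    exact ((hLV i t).div hS (ne_of_gt (hSpos t))).deriv
  simp only [hderiv, hfbar, hp]
  exact algebra_key n (fun i => P i t) (fun i => f i (fun k => P k t))
    (fun i => hpos i t) (hSpos t)
end

section
/- Suppose positive real-valued differentiable functions P_1, ..., P_n : ℝ → ℝ satisfy the Lotka–Volterra equations dP_i/dt = f_i(P_1(t), ..., P_n(t)) · P_i(t) for continuous functions f_i : [0,∞)^n → ℝ, and let p_i(t) = P_i(t) / Σ_j P_j(t). Then the square of the Fisher speed of the probability distribution p(t) = (p_1(t), ..., p_n(t)) equals the variance in fitness: Σ_{i=1}^n ṗ_i(t)² / p_i(t) = Σ_{j=1}^n p_j(t) (f_j(P_1(t), ..., P_n(t)) − f̄(t))², where f̄(t) = Σ_j p_j(t) f_j(P_1(t), ..., P_n(t)). -/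
open scoped BigOperators

/-- **Theorem 2 (fundamental theorem of natural selection, Fisher-speed form).**
If positive differentiable populations `P i` obey the Lotka–Volterra equations
with continuous fitness functions `f i` on `[0,∞)^n`, and `p i = P i / ∑ j, P j`,
then the square of the Fisher speed of `p`, namely `∑ i, (ṗ i)^2 / p i`,
equals the variance in fitness. -/
theorem fisher_speed_sq_eq_variance
    (n : ℕ) (P : Fin n → ℝ → ℝ) (f : Fin n → (Fin n → ℝ) → ℝ)
    (hpos : ∀ i t, 0 < P i t)
    (hPdiff : ∀ i, Differentiable ℝ (P i))
    (hcont : ∀ i, ContinuousOn (f i) {x : Fin n → ℝ | ∀ j, 0 ≤ x j})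
    (hLV : ∀ i t, HasDerivAt (P i) (f i (fun j => P j t) * P i t) t)
    (p : Fin n → ℝ → ℝ)
    (hp : ∀ i t, p i t = P i t / ∑ j, P j t)
    (fbar : ℝ → ℝ)
    (hfbar : ∀ t, fbar t = ∑ j, p j t * f j (fun k => P k t))
    (t : ℝ) :
    ∑ i, (deriv (p i) t) ^ 2 / p i t
      = ∑ j, p j t * (f j (fun k => P k t) - fbar t) ^ 2 := by
  classical
  rcases Nat.eq_zero_or_pos n with hn | hn
  · subst hn; simp
  have hS : ∀ s, 0 < ∑ j, P j s := fun s =>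
    Finset.sum_pos (fun j _ => hpos j s) (Finset.univ_nonempty_iff.mpr ⟨⟨0, hn⟩⟩)
  have hSder : HasDerivAt (fun s => ∑ j, P j s)
      (∑ j, f j (fun k => P k t) * P j t) t :=
    HasDerivAt.fun_sum fun j _ => hLV j t
  have hfbar' : (∑ j, f j (fun k => P k t) * P j t) = (∑ j, P j t) * fbar t := by
    rw [hfbar, Finset.mul_sum]
    refine Finset.sum_congr rfl fun j _ => ?_
    rw [hp]
    field_simp [ne_of_gt (hS t)]
  have hd : ∀ i, HasDerivAt (p i) (p i t * (f i (fun k => P k t) - fbar t)) t := by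
    intro i
    have hpfun : p i = fun s => P i s / ∑ j, P j s := funext fun s => hp i s
    rw [hpfun]
    have h := (hLV i t).fun_div hSder (ne_of_gt (hS t))
    refine h.congr_deriv ?_
    rw [hfbar']
    field_simp [ne_of_gt (hS t)]
  refine Finset.sum_congr rfl fun i _ => ?_
  rw [(hd i).deriv]
  have hpi : 0 < p i t := by rw [hp]; exact div_pos (hpos i t) (hS t)
  field_simp
end

section
/- Suppose positive real-valued differentiable functions P_1, ..., P_n : ℝ → ℝ satisfy the Lotka–Volterra equations dP_i/dt = f_i(P_1(t), ..., P_n(t)) · P_i(t), where each fitness function f_i : [0,∞)^n → ℝ is differentiable. Let p_i(t) = P_i(t) / Σ_j P_j(t) and f̄(t) = Σ_j p_j(t) f_j(P_1(t), ..., P_n(t)). Then the mean fitness is differentiable and its time derivative decomposes as d f̄/dt = Var(f) + Σ_{i=1}^n p_i(t) · (d/dt) f_i(P_1(t), ..., P_n(t)), where Var(f) = Σ_j p_j(t)(f_j(P_1(t), ..., P_n(t)) − f̄(t))² is the variance in fitness. -/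
open scoped BigOperators

/-- **Decomposition of the rate of change of mean fitness.**
If positive differentiable populations `P i` obey the Lotka–Volterra equations
with differentiable fitness functions `f i`, then the mean fitness
`f̄ = ∑ j, p j * f j (P t)` is differentiable and its time derivative equals
the variance in fitness plus `∑ i, p i t * (d/dt) f i (P t)`. -/
theorem deriv_mean_fitness_decomposition
    (n : ℕ) (P : Fin n → ℝ → ℝ) (f : Fin n → (Fin n → ℝ) → ℝ)
    (hpos : ∀ i t, 0 < P i t)
    (hPdiff : ∀ i, Differentiable ℝ (P i))
    (hfdiff : ∀ i, DifferentiableOn ℝ (f i) {x : Fin n → ℝ | ∀ j, 0 ≤ x j})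
    (hLV : ∀ i t, HasDerivAt (P i) (f i (fun j => P j t) * P i t) t)
    (p : Fin n → ℝ → ℝ)
    (hp : ∀ i t, p i t = P i t / ∑ j, P j t)
    (fbar : ℝ → ℝ)
    (hfbar : ∀ t, fbar t = ∑ j, p j t * f j (fun k => P k t))
    (t : ℝ) :
    HasDerivAt fbar
      ((∑ j, p j t * (f j (fun k => P k t) - fbar t) ^ 2)
        + ∑ i, p i t * deriv (fun s => f i (fun k => P k s)) t) t := by
  classical
  rcases Nat.eq_zero_or_pos n with h0 | h0
  · subst h0
    have hfb0 : fbar = fun _ => 0 := funext fun s => by simp [hfbar s]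
    simp only [hfb0, Finset.univ_eq_empty, Finset.sum_empty, add_zero]
    exact hasDerivAt_const t 0
  set S : ℝ → ℝ := fun s => ∑ j, P j s with hSdef
  set F : Fin n → ℝ → ℝ := fun i s => f i (fun k => P k s) with hFdef
  -- positivity of S
  have hSpos : ∀ s, 0 < S s := fun s =>
    Finset.sum_pos (fun j _ => hpos j s)
      (Finset.univ_nonempty_iff.mpr ⟨⟨0, h0⟩⟩)
  have hSne : S t ≠ 0 := (hSpos t).ne'
  -- differentiability of F i
  have hF : ∀ i s, DifferentiableAt ℝ (F i) s := by
    intro i s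
    have hmem : {x : Fin n → ℝ | ∀ j, 0 ≤ x j} ∈ nhds (fun k => P k s) := by
      have hopen : IsOpen {x : Fin n → ℝ | ∀ j, 0 < x j} := by
        have : {x : Fin n → ℝ | ∀ j, 0 < x j} = ⋂ j, (fun x : Fin n → ℝ => x j) ⁻¹' Set.Ioi 0 := by
          ext x; simp [Set.mem_iInter]
        rw [this]
        exact isOpen_iInter_of_finite fun j => (continuous_apply j).isOpen_preimage _ isOpen_Ioi
      exact Filter.mem_of_superset (hopen.mem_nhds (fun j => hpos j s))
        (fun x hx j => (hx j).le)
    have hcurve : DifferentiableAt ℝ (fun u : ℝ => fun k => P k u) s :=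
      differentiableAt_pi.mpr fun k => hPdiff k s
    exact ((hfdiff i).differentiableAt hmem).comp s hcurve
  -- derivative of S
  have hSd : HasDerivAt S (∑ j, F j t * P j t) t :=
    HasDerivAt.fun_sum fun j _ => hLV j t
  -- rewrite fbar
  have hfb : fbar = fun s => ∑ j, P j s / S s * F j s := by
    funext s; rw [hfbar]; simp [hp, hFdef, hSdef]
  -- derivative of each term
  have hterm : ∀ j : Fin n, HasDerivAt (fun s => P j s / S s * F j s)
      ((F j t * P j t * S t - P j t * (∑ k, F k t * P k t)) / S t ^ 2 * F j t
        + P j t / S t * deriv (F j) t) t :=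
    fun j => ((hLV j t).div hSd hSne).mul ((hF j t).hasDerivAt)
  have hsum : HasDerivAt fbar
      (∑ j, ((F j t * P j t * S t - P j t * (∑ k, F k t * P k t)) / S t ^ 2 * F j t
        + P j t / S t * deriv (F j) t)) t := by
    rw [hfb]; exact HasDerivAt.fun_sum fun j _ => hterm j
  convert hsum using 1
  -- now the algebraic identity
  have hpt : ∀ j, p j t = P j t / S t := fun j => hp j t
  have hpsum : ∑ j, p j t = 1 := by
    simp only [hpt]
    rw [← Finset.sum_div, hSdef]
    exact div_self hSne
  have hfbt : fbar t = ∑ j, p j t * F j t := hfbar t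
  -- S' = fbar t * S t
  have hS' : (∑ k, F k t * P k t) = fbar t * S t := by
    rw [hfbt, Finset.sum_mul]
    refine Finset.sum_congr rfl fun k _ => ?_
    rw [hpt]; field_simp
  rw [hS']
  have hterm_eq : ∀ j : Fin n,
      (F j t * P j t * S t - P j t * (fbar t * S t)) / S t ^ 2 * F j t
        + P j t / S t * deriv (F j) t
      = p j t * F j t * (F j t - fbar t) + p j t * deriv (F j) t := by
    intro j
    rw [hpt]
    field_simp
  simp only [hterm_eq]
  rw [Finset.sum_add_distrib]
  congr 1
  -- ∑ p (F - fbar)^2 = ∑ p F (F - fbar)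
  have key : ∀ j : Fin n, p j t * (F j t - fbar t) ^ 2
      = p j t * F j t * (F j t - fbar t) - fbar t * (p j t * F j t - p j t * fbar t) := by
    intro j; ring
  show ∑ j, p j t * (F j t - fbar t) ^ 2 = _
  simp only [key]
  rw [Finset.sum_sub_distrib, ← Finset.mul_sum, Finset.sum_sub_distrib, ← hfbt,
    ← Finset.sum_mul, hpsum, one_mul, sub_self, mul_zero, sub_zero]
end

section
/- Suppose positive real-valued differentiable functions P_1, ..., P_n : ℝ → ℝ satisfy dP_i/dt = c_i · P_i(t) for constants c_1, ..., c_n ∈ ℝ (the Lotka–Volterra equations with constant fitness functions). Let p_i(t) = P_i(t) / Σ_j P_j(t) and f̄(t) = Σ_j p_j(t) c_j. Then d f̄/dt = Σ_j p_j(t)(c_j − f̄(t))²; in particular, the mean fitness f̄ is nondecreasing in time. -/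
open scoped BigOperators

/-- **Constant fitness case: mean fitness increases at a rate equal to the
variance in fitness.**  If positive differentiable populations obey
`(P i)' = c i * P i` with constants `c i`, and `p i = P i / ∑ j, P j`,
`f̄ = ∑ j, p j * c j`, then `d f̄/dt = ∑ j, p j * (c j - f̄)^2`; in particular
`f̄` is nondecreasing in time. -/
theorem deriv_mean_fitness_constant_case
    (n : ℕ) (P : Fin n → ℝ → ℝ) (c : Fin n → ℝ)
    (hpos : ∀ i t, 0 < P i t)
    (hPdiff : ∀ i, Differentiable ℝ (P i))
    (hLV : ∀ i t, HasDerivAt (P i) (c i * P i t) t)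
    (p : Fin n → ℝ → ℝ)
    (hp : ∀ i t, p i t = P i t / ∑ j, P j t)
    (fbar : ℝ → ℝ)
    (hfbar : ∀ t, fbar t = ∑ j, p j t * c j) :
    (∀ t, HasDerivAt fbar (∑ j, p j t * (c j - fbar t) ^ 2) t) ∧
      Monotone fbar := by
  rcases Nat.eq_zero_or_pos n with hn | hn
  · subst hn
    have hf : fbar = fun _ => 0 := funext fun t => by simp [hfbar t]
    constructor
    · intro t
      have : (∑ j : Fin 0, p j t * (c j - fbar t) ^ 2) = 0 := by simp
      rw [this, hf]
      exact hasDerivAt_const t 0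
    · rw [hf]; exact monotone_const
  haveI : NeZero n := ⟨hn.ne'⟩
  set S : ℝ → ℝ := fun t => ∑ j, P j t with hS
  have hSpos : ∀ t, 0 < S t := fun t =>
    Finset.sum_pos (fun j _ => hpos j t) Finset.univ_nonempty
  have hSder : ∀ t, HasDerivAt S (∑ j, c j * P j t) t := fun t =>
    HasDerivAt.fun_sum fun j _ => hLV j t
  have hNder : ∀ t, HasDerivAt (fun t => ∑ j, c j * P j t)
      (∑ j, c j * (c j * P j t)) t := fun t =>
    HasDerivAt.fun_sum fun j _ => (hLV j t).const_mul (c j)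
  have hfbar' : ∀ t, fbar t = (∑ j, c j * P j t) / S t := by
    intro t
    rw [hfbar t, Finset.sum_div]
    exact Finset.sum_congr rfl fun j _ => by rw [hp j t]; ring
  have hfeq : fbar = fun t => (∑ j, c j * P j t) / S t := funext hfbar'
  have hkey : ∀ t, HasDerivAt fbar (∑ j, p j t * (c j - fbar t) ^ 2) t := by
    intro t
    have hder := (hNder t).div (hSder t) (hSpos t).ne'
    have hval : ∑ j, p j t * (c j - fbar t) ^ 2 =
        ((∑ j, c j * (c j * P j t)) * S t -
          (∑ j, c j * P j t) * (∑ j, c j * P j t)) / S t ^ 2 := by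
      set s := S t with hs
      set N := ∑ j, c j * P j t with hN
      set Q := ∑ j, c j * (c j * P j t) with hQ
      have hspos := hSpos t
      have h1 : ∑ j, p j t * (c j - fbar t) ^ 2
          = (1 / s) * ∑ j, P j t * (c j - N / s) ^ 2 := by
        rw [Finset.mul_sum]
        refine Finset.sum_congr rfl fun j _ => ?_
        rw [hp j t, hfbar' t]
        ring
      have h2 : ∑ j, P j t * (c j - N / s) ^ 2
          = Q - 2 * (N / s) * N + (N / s) ^ 2 * s := by
        have : ∑ j, P j t * (c j - N / s) ^ 2
            = ∑ j, (c j * (c j * P j t) - 2 * (N / s) * (c j * P j t)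
                + (N / s) ^ 2 * P j t) :=
          Finset.sum_congr rfl fun j _ => by ring
        rw [this, Finset.sum_add_distrib, Finset.sum_sub_distrib,
          ← Finset.mul_sum, ← Finset.mul_sum, ← hQ, ← hN]
      rw [h1, h2]
      have hs0 : s ≠ 0 := hspos.ne'
      field_simp
      ring
    rw [hval, hfeq]
    exact hder
  refine ⟨hkey, ?_⟩
  have hdiff : Differentiable ℝ fbar := fun t => (hkey t).differentiableAt
  refine monotone_of_deriv_nonneg hdiff fun t => ?_
  rw [(hkey t).deriv]
  refine Finset.sum_nonneg fun j _ => mul_nonneg ?_ (sq_nonneg _)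
  rw [hp j t]
  exact div_nonneg (hpos j t).le (hSpos t).le
end
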